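/- Let k ≥ 1, a ≥ 1, b ≥ 0 be integers with gcd(a,b)=1, and let p be a prime with p ∤ a. Then the function n ↦ v_p(g_{k,a,b}(n)) is periodic with period p^{⌊log_p k⌋}: for all positive integers n, v_p(g_{k,a,b}(n + p^{⌊log_p k⌋})) = v_p(g_{k,a,b}(n)). -/

import Mathlib

open Finset

lemma aux_count (V M : ℕ) (h : V ≤ M) :
    (∑ j ∈ Finset.Icc 1 M, if j ≤ V then 1 else 0) = V := by
  rw [← Finset.card_filter]
  have : (Finset.Icc 1 M).filter (fun j => j ≤ V) = Finset.Icc 1 V := by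
    ext j; simp only [Finset.mem_filter, Finset.mem_Icc]; omega
  simp [this]

lemma aux_val_le (p : ℕ) (hp : p.Prime) (t M : ℕ) (ht : t ≠ 0) (htM : t ≤ M) :
    padicValNat p t ≤ M := by
  have h1 : padicValNat p t < p ^ padicValNat p t := Nat.lt_pow_self hp.one_lt
  have h2 : p ^ padicValNat p t ≤ t :=
    Nat.le_of_dvd (Nat.pos_of_ne_zero ht) pow_padicValNat_dvd
  omega

lemma aux_val_sum (p : ℕ) (hp : p.Prime) (t M : ℕ) (ht : t ≠ 0) (htM : t ≤ M) :
    padicValNat p t = ∑ j ∈ Finset.Icc 1 M, if p ^ j ∣ t then 1 else 0 := by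
  haveI : Fact p.Prime := ⟨hp⟩
  have hdvd : ∀ j : ℕ, (p ^ j ∣ t) = (j ≤ padicValNat p t) :=
    fun j => propext (padicValNat_dvd_iff_le ht)
  simp only [hdvd]
  exact (aux_count _ _ (aux_val_le p hp t M ht htM)).symm

lemma aux_lcm (p : ℕ) (hp : p.Prime) (s : Finset ℕ) (f : ℕ → ℕ)
    (hf : ∀ i ∈ s, f i ≠ 0) :
    padicValNat p (s.lcm f) = s.sup fun i => padicValNat p (f i) := by
  classical
  induction s using Finset.induction with
  | empty => simp
  | @insert x s hx ih =>
    have hfx : f x ≠ 0 := hf x (Finset.mem_insert_self x s)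
    have hs : ∀ i ∈ s, f i ≠ 0 := fun i hi => hf i (Finset.mem_insert_of_mem hi)
    have hlne : s.lcm f ≠ 0 := by
      intro h
      obtain ⟨i, hi, h0⟩ := (Finset.lcm_eq_zero_iff).mp h
      exact hs i hi h0
    rw [Finset.lcm_insert, Finset.sup_insert, ← ih hs, lcm_eq_nat_lcm]
    rw [← Nat.factorization_def _ hp, ← Nat.factorization_def _ hp, ← Nat.factorization_def _ hp,
      Nat.factorization_lcm hfx hlne, Finsupp.sup_apply]

lemma aux_prod (p : ℕ) (hp : p.Prime) (s : Finset ℕ) (f : ℕ → ℕ)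
    (hf : ∀ i ∈ s, f i ≠ 0) :
    padicValNat p (∏ i ∈ s, f i) = ∑ i ∈ s, padicValNat p (f i) := by
  classical
  haveI : Fact p.Prime := ⟨hp⟩
  induction s using Finset.induction with
  | empty => simp
  | @insert x s hx ih =>
    have hfx : f x ≠ 0 := hf x (Finset.mem_insert_self x s)
    have hs : ∀ i ∈ s, f i ≠ 0 := fun i hi => hf i (Finset.mem_insert_of_mem hi)
    have hpne : (∏ i ∈ s, f i) ≠ 0 := Finset.prod_ne_zero_iff.mpr hs
    rw [Finset.prod_insert hx, Finset.sum_insert hx, padicValNat.mul hfx hpne, ih hs]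

theorem stmt12 (k a b : ℕ) (hk : 1 ≤ k) (ha : 1 ≤ a) (hab : Nat.gcd a b = 1)
    (p : ℕ) (hp : p.Prime) (hpa : ¬ p ∣ a) (n : ℕ) (hn : 1 ≤ n) :
    padicValNat p ((∏ i ∈ Finset.range (k+1), (b + (n + p ^ Nat.log p k + i) * a)) /
        (Finset.range (k+1)).lcm (fun i => b + (n + p ^ Nat.log p k + i) * a)) =
    padicValNat p ((∏ i ∈ Finset.range (k+1), (b + (n + i) * a)) /
        (Finset.range (k+1)).lcm (fun i => b + (n + i) * a)) := by
  haveI : Fact p.Prime := ⟨hp⟩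
  set L := Nat.log p k with hL
  set q := p ^ L with hq
  -- positivity of terms
  have hterm : ∀ m i : ℕ, 1 ≤ m → b + (m + i) * a ≠ 0 := by
    intro m i hm
    have : 0 < (m + i) * a := Nat.mul_pos (by omega) (by omega)
    omega
  -- reduction of quotient valuation to sum minus sup
  have main : ∀ m : ℕ, 1 ≤ m →
      padicValNat p ((∏ i ∈ Finset.range (k+1), (b + (m + i) * a)) /
        (Finset.range (k+1)).lcm (fun i => b + (m + i) * a)) =
      (∑ i ∈ Finset.range (k+1), padicValNat p (b + (m + i) * a)) -
      (Finset.range (k+1)).sup (fun i => padicValNat p (b + (m + i) * a)) := by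
    intro m hm
    have hne : ∀ i ∈ Finset.range (k+1), (b + (m + i) * a) ≠ 0 := fun i _ => hterm m i hm
    have hdvd : (Finset.range (k+1)).lcm (fun i => b + (m + i) * a) ∣
        ∏ i ∈ Finset.range (k+1), (b + (m + i) * a) :=
      Finset.lcm_dvd fun i hi => Finset.dvd_prod_of_mem _ hi
    rw [padicValNat.div_of_dvd hdvd, aux_prod p hp _ _ hne, aux_lcm p hp _ _ hne]
  rw [main n hn, main (n + q) (by omega)]
  -- bound M for valuations
  set M := b + (n + q + k) * a with hM
  have hle : ∀ m i : ℕ, m ≤ n + q → i ≤ k → b + (m + i) * a ≤ M := by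
    intro m i hm hi
    have : (m + i) * a ≤ (n + q + k) * a := Nat.mul_le_mul_right a (by omega)
    omega
  -- counting function
  set c : ℕ → ℕ → ℕ := fun m j =>
    ((Finset.range (k+1)).filter (fun i => p ^ j ∣ b + (m + i) * a)).card with hc
  -- sum of valuations as sum of counts
  have hS : ∀ m : ℕ, 1 ≤ m → m ≤ n + q →
      (∑ i ∈ Finset.range (k+1), padicValNat p (b + (m + i) * a)) =
      ∑ j ∈ Finset.Icc 1 M, c m j := by
    intro m hm hm'
    rw [Finset.sum_congr rfl (fun i hi => aux_val_sum p hp _ M (hterm m i hm)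
      (hle m i hm' (by simpa [Nat.lt_succ_iff] using hi)))]
    rw [Finset.sum_comm]
    exact Finset.sum_congr rfl fun j _ => (Finset.card_filter _ _).symm
  -- sup of valuations as sum of indicators
  have hX : ∀ m : ℕ, 1 ≤ m → m ≤ n + q →
      (Finset.range (k+1)).sup (fun i => padicValNat p (b + (m + i) * a)) =
      ∑ j ∈ Finset.Icc 1 M, if 0 < c m j then 1 else 0 := by
    intro m hm hm'
    have hsup_le : (Finset.range (k+1)).sup (fun i => padicValNat p (b + (m + i) * a)) ≤ M :=
      Finset.sup_le fun i hi => aux_val_le p hp _ M (hterm m i hm)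
        (hle m i hm' (by simpa [Nat.lt_succ_iff] using hi))
    rw [← aux_count _ M hsup_le]
    apply Finset.sum_congr rfl
    intro j hj
    have hj1 : 1 ≤ j := (Finset.mem_Icc.mp hj).1
    congr 1
    rw [eq_iff_iff]
    rw [Finset.le_sup_iff (show (⊥ : ℕ) < j by simp only [bot_eq_zero]; omega)]
    rw [Finset.card_pos, Finset.filter_nonempty_iff]
    constructor
    · rintro ⟨i, hi, hvi⟩
      exact ⟨i, hi, (padicValNat_dvd_iff_le (hterm m i hm)).mpr hvi⟩
    · rintro ⟨i, hi, hvi⟩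
      exact ⟨i, hi, (padicValNat_dvd_iff_le (hterm m i hm)).mp hvi⟩
  -- counts agree for j ≤ L
  have hcongr : ∀ j : ℕ, j ≤ L → c (n + q) j = c n j := by
    intro j hj
    have hiff : ∀ i : ℕ, (p ^ j ∣ b + (n + q + i) * a) ↔ (p ^ j ∣ b + (n + i) * a) := by
      intro i
      have hd : p ^ j ∣ q * a := Dvd.dvd.mul_right (pow_dvd_pow p hj) a
      have he : b + (n + q + i) * a = q * a + (b + (n + i) * a) := by ring
      rw [he, Nat.dvd_add_right hd]
    simp only [hc]
    congr 1
    exact Finset.filter_congr fun i _ => hiff i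
  -- counts at most 1 for j > L
  have hsmall : ∀ j : ℕ, L < j → ∀ m : ℕ, c m j ≤ 1 := by
    intro j hj m
    apply Finset.card_le_one.mpr
    have key : ∀ i i' : ℕ, i ≤ i' → i' ≤ k → p ^ j ∣ b + (m + i) * a →
        p ^ j ∣ b + (m + i') * a → i = i' := by
      intro i i' hii hik h1 h2
      have h3 := Nat.dvd_sub h2 h1
      have heq : (b + (m + i') * a) - (b + (m + i) * a) = (i' - i) * a := by
        rw [Nat.sub_mul, Nat.add_mul, Nat.add_mul]
        omega
      rw [heq] at h3
      have hcop : Nat.Coprime (p ^ j) a :=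
        (Nat.Prime.coprime_iff_not_dvd hp).mpr hpa |>.pow_left _
      have h4 : p ^ j ∣ i' - i := hcop.dvd_of_dvd_mul_right h3
      have h5 : i' - i < p ^ j := by
        have hk1 : k < p ^ (L + 1) := Nat.lt_pow_succ_log_self hp.one_lt k
        have : p ^ (L + 1) ≤ p ^ j := Nat.pow_le_pow_right hp.pos (by omega)
        omega
      have := Nat.eq_zero_of_dvd_of_lt h4 h5
      omega
    intro i hi i' hi'
    simp only [Finset.mem_filter, Finset.mem_range, Nat.lt_succ_iff] at hi hi'
    rcases le_total i i' with h | h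
    · exact key i i' h hi'.1 hi.2 hi'.2
    · exact (key i' i h hi.1 hi'.2 hi.2).symm
  -- the cross identity
  have hXS : ∀ m : ℕ, (Finset.range (k+1)).sup (fun i => padicValNat p (b + (m + i) * a)) ≤
      ∑ i ∈ Finset.range (k+1), padicValNat p (b + (m + i) * a) :=
    fun m => Finset.sup_le fun i hi =>
      Finset.single_le_sum (f := fun i => padicValNat p (b + (m + i) * a))
        (fun _ _ => Nat.zero_le _) hi
  have cross :
      (∑ i ∈ Finset.range (k+1), padicValNat p (b + (n + q + i) * a)) +
        (Finset.range (k+1)).sup (fun i => padicValNat p (b + (n + i) * a)) =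
      (∑ i ∈ Finset.range (k+1), padicValNat p (b + (n + i) * a)) +
        (Finset.range (k+1)).sup (fun i => padicValNat p (b + (n + q + i) * a)) := by
    rw [hS (n + q) (by omega) le_rfl, hS n hn (by omega),
      hX (n + q) (by omega) le_rfl, hX n hn (by omega),
      ← Finset.sum_add_distrib, ← Finset.sum_add_distrib]
    apply Finset.sum_congr rfl
    intro j hj
    rcases le_or_gt j L with hjL | hjL
    · rw [hcongr j hjL]
    · have h1 := hsmall j hjL n
      have h2 := hsmall j hjL (n + q)
      split_ifs <;> omega
  have e1 := hXS (n + q)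
  have e2 := hXS n
  omega
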